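/- Let G be a connected simple graph on N vertices with diameter D that is distance-regular: there exist integers b₀, b₁, …, b_{D−1} and c₁, c₂, …, c_D such that for every pair of vertices i, j at distance r, the number of neighbors of i at distance r − 1 from j equals c_r (for 1 ≤ r ≤ D) and the number of neighbors of i at distance r + 1 from j equals b_r (for 0 ≤ r ≤ D − 1). Then there exist D matrices A^(1), …, A^(D), each in M(G), such that A^(D) ⋯ A^(1) = (1/N)·𝟙𝟙ᵀ, i.e., every distance-regular graph satisfies the definitive consensus conjecture. -/

import Mathlib

open Matrix

/-- A real `N × N` matrix complies with the graph `G` when its off-diagonal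
entries vanish outside the edges of `G`. -/
def SimpleGraph.Complies {N : ℕ} (G : SimpleGraph (Fin N))
    (A : Matrix (Fin N) (Fin N) ℝ) : Prop :=
  ∀ i j : Fin N, i ≠ j → ¬ G.Adj i j → A i j = 0

private lemma conj_list_prod {m : Type*} [Fintype m] [DecidableEq m]
    (U V : Matrix m m ℝ) (hUV : U * V = 1) (hVU : V * U = 1)
    (f g : ℝ → Matrix m m ℝ) (hfg : ∀ μ, f μ = U * g μ * V) (l : List ℝ) :
    (l.map f).prod = U * (l.map g).prod * V := by
  induction l with
  | nil => simp [hUV]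
  | cons μ t ih =>
      simp only [List.map_cons, List.prod_cons, ih, hfg μ]
      simp only [Matrix.mul_assoc]
      rw [← Matrix.mul_assoc V U, hVU, Matrix.one_mul]

private lemma diag_list_prod {m : Type*} [Fintype m] [DecidableEq m]
    (ev : m → ℝ) (l : List ℝ) :
    (l.map fun μ => diagonal ev - μ • (1 : Matrix m m ℝ)).prod
      = diagonal fun j => (l.map fun μ => ev j - μ).prod := by
  induction l with
  | nil => simp
  | cons μ t ih =>
      simp only [List.map_cons, List.prod_cons, ih]
      have : μ • (1 : Matrix m m ℝ) = diagonal fun _ => μ := by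
        ext i j; by_cases h : i = j <;> simp [Matrix.one_apply, h]
      rw [this, diagonal_sub, diagonal_mul_diagonal]

private lemma hermitian_ann {n : ℕ}
    (S : Matrix (Fin n) (Fin n) ℝ) (hS : S.IsHermitian) :
    ((List.ofFn hS.eigenvalues).map (fun μ : ℝ => S - μ • (1 : Matrix (Fin n) (Fin n) ℝ))).prod = 0 := by
  set U : Matrix (Fin n) (Fin n) ℝ := (hS.eigenvectorUnitary : Matrix (Fin n) (Fin n) ℝ) with hU
  have hUV : U * star U = 1 := (Matrix.mem_unitaryGroup_iff).mp hS.eigenvectorUnitary.2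
  have hVU : star U * U = 1 := (Matrix.mem_unitaryGroup_iff').mp hS.eigenvectorUnitary.2
  have hspec : S = U * diagonal hS.eigenvalues * star U := by
    have := hS.spectral_theorem
    simpa using this
  have hfg : ∀ μ : ℝ, S - μ • (1 : Matrix (Fin n) (Fin n) ℝ)
      = U * (diagonal hS.eigenvalues - μ • 1) * star U := by
    intro μ
    rw [Matrix.mul_sub, Matrix.sub_mul, ← hspec]
    congr 1
    rw [Matrix.mul_smul, Matrix.smul_mul, Matrix.mul_one, hUV]
  rw [conj_list_prod U (star U) hUV hVU _ _ hfg, diag_list_prod]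
  have : (diagonal fun j => ((List.ofFn hS.eigenvalues).map
      fun μ => hS.eigenvalues j - μ).prod) = (0 : Matrix (Fin n) (Fin n) ℝ) := by
    have hz : ∀ j, (List.ofFn ((fun μ => hS.eigenvalues j - μ) ∘ hS.eigenvalues)).prod = 0 := by
      intro j
      apply List.prod_eq_zero
      simp only [List.mem_ofFn, Function.comp_apply]
      exact ⟨j, sub_self _⟩
    ext i j
    rcases eq_or_ne i j with h | h
    · subst h; simp [Matrix.diagonal_apply_eq, hz]
    · simp [Matrix.diagonal_apply_ne _ h]
  rw [this, Matrix.mul_zero, Matrix.zero_mul]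

private lemma similar_ann {n : ℕ} (M S Δ Δ' : Matrix (Fin n) (Fin n) ℝ)
    (hΔ : Δ * Δ' = 1) (hcomm : M * Δ = Δ * S) (l : List ℝ)
    (h0 : (l.map fun μ : ℝ => S - μ • (1 : Matrix (Fin n) (Fin n) ℝ)).prod = 0) :
    (l.map fun μ : ℝ => M - μ • (1 : Matrix (Fin n) (Fin n) ℝ)).prod = 0 := by
  have hfac : ∀ μ : ℝ, (M - μ • 1) * Δ = Δ * (S - μ • 1) := by
    intro μ
    rw [Matrix.sub_mul, Matrix.mul_sub, hcomm, Matrix.smul_mul, Matrix.one_mul,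
      Matrix.mul_smul, Matrix.mul_one]
  have key : ∀ l' : List ℝ, (l'.map fun μ : ℝ => M - μ • (1 : Matrix (Fin n) (Fin n) ℝ)).prod * Δ
      = Δ * (l'.map fun μ : ℝ => S - μ • (1 : Matrix (Fin n) (Fin n) ℝ)).prod := by
    intro l'
    induction l' with
    | nil => simp
    | cons μ t ih =>
        simp only [List.map_cons, List.prod_cons]
        rw [Matrix.mul_assoc, ih, ← Matrix.mul_assoc, hfac, Matrix.mul_assoc]
  have key := key l
  rw [h0, Matrix.mul_zero] at key
  calc (l.map fun μ : ℝ => M - μ • (1 : Matrix (Fin n) (Fin n) ℝ)).prod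
      = (l.map fun μ : ℝ => M - μ • (1 : Matrix (Fin n) (Fin n) ℝ)).prod * (Δ * Δ') := by
        rw [hΔ, Matrix.mul_one]
    _ = 0 := by rw [← Matrix.mul_assoc, key, Matrix.zero_mul]

private lemma prod_map_mulVec {n : ℕ} (M : Matrix (Fin n) (Fin n) ℝ) (k : ℝ) (x : Fin n → ℝ)
    (hMx : M *ᵥ x = k • x) (l : List ℝ) :
    (l.map fun μ : ℝ => M - μ • (1 : Matrix (Fin n) (Fin n) ℝ)).prod *ᵥ x
      = (l.map fun μ => k - μ).prod • x := by
  induction l with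
  | nil => simp
  | cons μ t ih =>
      simp only [List.map_cons, List.prod_cons]
      rw [← Matrix.mulVec_mulVec, ih, Matrix.mulVec_smul, Matrix.sub_mulVec, hMx,
        Matrix.smul_mulVec, Matrix.one_mulVec, ← sub_smul, smul_smul, mul_comm]

private lemma mem_of_ann {n : ℕ} (M : Matrix (Fin n) (Fin n) ℝ) (l : List ℝ)
    (h0 : (l.map fun μ : ℝ => M - μ • (1 : Matrix (Fin n) (Fin n) ℝ)).prod = 0) (k : ℝ)
    (x : Fin n → ℝ) (hx : x ≠ 0) (hMx : M *ᵥ x = k • x) : k ∈ l := by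
  by_contra hk
  have hprod : (l.map fun μ => k - μ).prod ≠ 0 := by
    apply List.prod_ne_zero
    intro h0'
    rcases List.mem_map.mp h0' with ⟨μ, hμ, hμ2⟩
    rw [sub_eq_zero] at hμ2
    exact hk (hμ2 ▸ hμ)
  have := prod_map_mulVec M k x hMx l
  rw [h0, Matrix.zero_mulVec] at this
  rcases (smul_eq_zero.mp this.symm) with h | h
  · exact hprod h
  · exact hx h
open Matrix

def extv {n : ℕ} (g : Fin n → ℝ) : ℕ → ℝ := fun s => if h : s < n then g ⟨s, h⟩ else 0

lemma extv_coe {n : ℕ} (g : Fin n → ℝ) (r : Fin n) : extv g (r : ℕ) = g r := by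
  simp [extv, r.isLt]

lemma extv_lt {n : ℕ} (g : Fin n → ℝ) (s : ℕ) (hs : s < n) : extv g s = g ⟨s, hs⟩ :=
  dif_pos hs

lemma extv_ge {n : ℕ} (g : Fin n → ℝ) (s : ℕ) (hs : n ≤ s) : extv g s = 0 := by
  simp [extv, Nat.not_lt.mpr hs]

def triL (D : ℕ) (cc bb : ℕ → ℝ) (k : ℝ) : Matrix (Fin (D+1)) (Fin (D+1)) ℝ :=
  Matrix.of fun r s : Fin (D+1) =>
    (if (s:ℕ)+1 = (r:ℕ) then cc r else 0)
    + (if (s:ℕ) = (r:ℕ) then k - cc r - bb r else 0)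
    + (if (r:ℕ)+1 = (s:ℕ) then bb r else 0)

def e0D (D : ℕ) : Fin (D+1) → ℝ := fun s => if (s:ℕ) = 0 then 1 else 0

section Small
variable (D : ℕ) (cc bb : ℕ → ℝ) (k : ℝ)

lemma triL_row (hcc0 : cc 0 = 0) (g : Fin (D+1) → ℝ) (r : Fin (D+1)) :
    (triL D cc bb k *ᵥ g) r
      = cc r * extv g ((r:ℕ) - 1) + (k - cc r - bb r) * extv g r
        + bb r * extv g ((r:ℕ) + 1) := by
  have hsplit : (triL D cc bb k *ᵥ g) r
      = (∑ s : Fin (D+1), (if (s:ℕ)+1 = (r:ℕ) then cc r else 0) * g s)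
      + (∑ s : Fin (D+1), (if (s:ℕ) = (r:ℕ) then k - cc r - bb r else 0) * g s)
      + (∑ s : Fin (D+1), (if (r:ℕ)+1 = (s:ℕ) then bb r else 0) * g s) := by
    rw [← Finset.sum_add_distrib, ← Finset.sum_add_distrib]
    simp only [Matrix.mulVec, dotProduct, triL, Matrix.of_apply, add_mul]
  rw [hsplit]
  have h2 : (∑ s : Fin (D+1), (if (s:ℕ) = (r:ℕ) then k - cc r - bb r else 0) * g s)
      = (k - cc r - bb r) * extv g r := by
    rw [Finset.sum_eq_single r]
    · rw [if_pos rfl, extv_coe]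
    · intro s _ hs
      rw [if_neg (fun h => hs (Fin.ext h)), zero_mul]
    · intro h; exact absurd (Finset.mem_univ r) h
  have h1 : (∑ s : Fin (D+1), (if (s:ℕ)+1 = (r:ℕ) then cc r else 0) * g s)
      = cc r * extv g ((r:ℕ) - 1) := by
    rcases Nat.eq_zero_or_pos (r:ℕ) with hr | hr
    · rw [hr, hcc0, zero_mul]
      apply Finset.sum_eq_zero
      intro s _
      simp
    · have hlt : (r:ℕ) - 1 < D + 1 := by omega
      rw [Finset.sum_eq_single (⟨(r:ℕ) - 1, hlt⟩ : Fin (D+1))]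
      · rw [if_pos (by simp; omega)]
        congr 1
        simp [extv, hlt]
      · intro s _ hs
        rw [if_neg, zero_mul]
        intro h
        exact hs (Fin.ext (by simp; omega))
      · intro h; exact absurd (Finset.mem_univ _) h
  have h3 : (∑ s : Fin (D+1), (if (r:ℕ)+1 = (s:ℕ) then bb r else 0) * g s)
      = bb r * extv g ((r:ℕ) + 1) := by
    rcases lt_or_ge (r:ℕ) D with hr | hr
    · have hlt : (r:ℕ) + 1 < D + 1 := by omega
      rw [Finset.sum_eq_single (⟨(r:ℕ) + 1, hlt⟩ : Fin (D+1))]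
      · rw [if_pos (by simp)]
        congr 1
        simp [extv, hlt]
      · intro s _ hs
        rw [if_neg, zero_mul]
        intro h
        exact hs (Fin.ext (by simp; omega))
      · intro h; exact absurd (Finset.mem_univ _) h
    · have hrD : (r:ℕ) = D := by omega
      rw [extv_ge g _ (by omega), mul_zero]
      apply Finset.sum_eq_zero
      intro s _
      rw [if_neg (by omega), zero_mul]
  rw [h1, h2, h3]

lemma triL_const (hcc0 : cc 0 = 0) (hbbD : bb D = 0) :
    triL D cc bb k *ᵥ (fun _ => (1:ℝ)) = k • (fun _ => (1:ℝ)) := by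
  funext r
  rw [triL_row D cc bb k hcc0]
  have e1 : extv (fun _ : Fin (D+1) => (1:ℝ)) ((r:ℕ) - 1) = 1 :=
    extv_lt _ _ (by omega)
  have e2 : extv (fun _ : Fin (D+1) => (1:ℝ)) (r:ℕ) = 1 :=
    extv_lt _ _ (by omega)
  rcases lt_or_ge (r:ℕ) D with hr | hr
  · have e3 : extv (fun _ : Fin (D+1) => (1:ℝ)) ((r:ℕ) + 1) = 1 :=
      extv_lt _ _ (by omega)
    rw [e1, e2, e3]
    simp only [Pi.smul_apply, smul_eq_mul]; ring
  · have hrD : (r:ℕ) = D := by omega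
    have e3 : extv (fun _ : Fin (D+1) => (1:ℝ)) ((r:ℕ) + 1) = 0 := by
      apply extv_ge; omega
    rw [e1, e2, e3, hrD, hbbD]
    simp only [Pi.smul_apply, smul_eq_mul]; ring

lemma triL_ker (hcc0 : cc 0 = 0) (hbbpos : ∀ r, r < D → bb r ≠ 0)
    (y : Fin (D+1) → ℝ) (hy : triL D cc bb k *ᵥ y = k • y) (r : Fin (D+1)) :
    y r = y ⟨0, Nat.succ_pos D⟩ := by
  suffices H : ∀ m : ℕ, ∀ hm : m < D + 1, y ⟨m, hm⟩ = y ⟨0, Nat.succ_pos D⟩ by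
    have := H r r.isLt
    rwa [Fin.eta] at this
  intro m
  induction m using Nat.strong_induction_on with
  | _ m ih =>
    intro hm
    match m, hm with
    | 0, _ => rfl
    | (m'+1), hm =>
      have hrow := congrFun hy ⟨m', by omega⟩
      rw [triL_row D cc bb k hcc0] at hrow
      have hv : ((⟨m', by omega⟩ : Fin (D+1)) : ℕ) = m' := rfl
      rw [hv] at hrow
      have h1 : cc m' * extv y (m' - 1) = cc m' * y ⟨0, Nat.succ_pos D⟩ := by
        rcases Nat.eq_zero_or_pos m' with h | h
        · rw [h, hcc0, zero_mul, zero_mul]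
        · rw [extv_lt _ _ (by omega), ih (m' - 1) (by omega) (by omega)]
      have h2 : extv y m' = y ⟨0, Nat.succ_pos D⟩ := by
        rw [extv_lt _ _ (by omega)]
        exact ih m' (by omega) (by omega)
      have h3 : extv y (m' + 1) = y ⟨m' + 1, hm⟩ := extv_lt _ _ hm
      have h4 : (k • y) (⟨m', by omega⟩ : Fin (D+1)) = k * y ⟨0, Nat.succ_pos D⟩ := by
        rw [Pi.smul_apply, smul_eq_mul]
        congr 1
        exact ih m' (by omega) (by omega)
      rw [h1, h2, h3, h4] at hrow
      exact mul_left_cancel₀ (hbbpos m' (by omega))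
        (show bb m' * y ⟨m' + 1, hm⟩ = bb m' * y ⟨0, Nat.succ_pos D⟩ by
          linear_combination hrow)

lemma triL_top (hcc0 : cc 0 = 0) (t : List ℝ) (ht : t.length ≤ D) :
    (∀ s : ℕ, t.length < s →
      extv ((t.map fun μ : ℝ => triL D cc bb k - μ • 1).prod *ᵥ e0D D) s = 0)
    ∧ extv ((t.map fun μ : ℝ => triL D cc bb k - μ • 1).prod *ᵥ e0D D) t.length
        = ∏ s ∈ Finset.Icc 1 t.length, cc s := by
  induction t with
  | nil =>
    constructor
    · intro s hs
      rcases lt_or_ge s (D+1) with h | h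
      · rw [List.map_nil, List.prod_nil, Matrix.one_mulVec, extv_lt _ _ h]
        have hv : ((⟨s, h⟩ : Fin (D+1)) : ℕ) = s := rfl
        simp only [e0D, hv]
        rw [if_neg (by omega)]
      · rw [extv_ge _ _ h]
    · rw [List.map_nil, List.prod_nil, Matrix.one_mulVec, List.length_nil]
      rw [extv_lt _ _ (Nat.succ_pos D)]
      simp [e0D]
  | cons μ t ih =>
    have ht' : t.length ≤ D := le_trans (by simp) ht
    obtain ⟨ih1, ih2⟩ := ih ht'
    set x := (t.map fun μ : ℝ => triL D cc bb k - μ • 1).prod *ᵥ e0D D with hx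
    have hlen : (μ :: t).length = t.length + 1 := by simp
    have hprod : ((μ :: t).map fun μ : ℝ => triL D cc bb k - μ • 1).prod *ᵥ e0D D
        = (triL D cc bb k - μ • 1) *ᵥ x := by
      rw [List.map_cons, List.prod_cons, ← Matrix.mulVec_mulVec]
    have hform : ∀ s : Fin (D+1), ((triL D cc bb k - μ • 1) *ᵥ x) s
        = cc s * extv x ((s:ℕ) - 1) + (k - cc s - bb s) * extv x s
          + bb s * extv x ((s:ℕ) + 1) - μ * extv x s := by
      intro s
      rw [Matrix.sub_mulVec, Pi.sub_apply, triL_row D cc bb k hcc0,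
        Matrix.smul_mulVec, Matrix.one_mulVec, Pi.smul_apply, smul_eq_mul,
        ← extv_coe x s]
    constructor
    · intro s hs
      rw [hlen] at hs
      rcases lt_or_ge s (D+1) with h | h
      · rw [hprod, extv_lt _ _ h, hform]
        have hv : ((⟨s, h⟩ : Fin (D+1)) : ℕ) = s := rfl
        rw [hv, ih1 (s-1) (by omega), ih1 s (by omega), ih1 (s+1) (by omega)]
        ring
      · rw [extv_ge _ _ h]
    · rw [hlen, hprod]
      have h : t.length + 1 < D + 1 := by omega
      rw [extv_lt _ _ h, hform]
      have hv : ((⟨t.length + 1, h⟩ : Fin (D+1)) : ℕ) = t.length + 1 := rfl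
      rw [hv]
      have e1 : extv x (t.length + 1 - 1) = ∏ s ∈ Finset.Icc 1 t.length, cc s := by
        simpa using ih2
      rw [e1, ih1 (t.length + 1) (by omega), ih1 (t.length + 1 + 1) (by omega),
        Finset.prod_Icc_succ_top (by omega : 1 ≤ t.length + 1)]
      ring

lemma small_main (hcc0 : cc 0 = 0) (hbbD : bb D = 0)
    (hccpos : ∀ r, 1 ≤ r → r ≤ D → 0 < cc r) (hbbpos : ∀ r, r < D → 0 < bb r) :
    ∃ l : List ℝ, l.length = D ∧ ∃ γ : ℝ, γ ≠ 0 ∧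
      ((l.map fun μ : ℝ => triL D cc bb k - μ • 1).prod *ᵥ e0D D) = fun _ => γ := by
  classical
  set L : Matrix (Fin (D+1)) (Fin (D+1)) ℝ := triL D cc bb k with hLdef
  -- the symmetrizing diagonal
  set δ : ℕ → ℝ := fun r => Nat.rec (1:ℝ) (fun r' ih => ih * Real.sqrt (cc (r'+1) / bb r')) r
    with hδ
  have hδ0 : δ 0 = 1 := rfl
  have hδsucc : ∀ r, δ (r+1) = δ r * Real.sqrt (cc (r+1) / bb r) := fun r => rfl
  have hδpos : ∀ r, r ≤ D → 0 < δ r := by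
    intro r
    induction r with
    | zero => intro _; rw [hδ0]; norm_num
    | succ r ihr =>
      intro hr
      rw [hδsucc]
      have h1 : 0 < cc (r+1) := hccpos _ (by omega) (by omega)
      have h2 : 0 < bb r := hbbpos _ (by omega)
      exact mul_pos (ihr (by omega)) (Real.sqrt_pos.mpr (by positivity))
  have hδne : ∀ r : Fin (D+1), δ (r:ℕ) ≠ 0 := fun r => ne_of_gt (hδpos _ (by omega))
  set Δ : Matrix (Fin (D+1)) (Fin (D+1)) ℝ := diagonal (fun r : Fin (D+1) => δ r) with hΔdef
  set Δ' : Matrix (Fin (D+1)) (Fin (D+1)) ℝ := diagonal (fun r : Fin (D+1) => (δ r)⁻¹)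
    with hΔ'def
  have hΔΔ' : Δ * Δ' = 1 := by
    rw [hΔdef, hΔ'def, diagonal_mul_diagonal, ← diagonal_one]
    exact congrArg diagonal (funext fun r => mul_inv_cancel₀ (hδne r))
  set S : Matrix (Fin (D+1)) (Fin (D+1)) ℝ := Δ' * L * Δ with hSdef
  have hSe : ∀ i j : Fin (D+1), S i j = (δ (i:ℕ))⁻¹ * (L i j * δ (j:ℕ)) := by
    intro i j
    rw [hSdef, Matrix.mul_assoc, hΔ'def, Matrix.diagonal_mul, hΔdef, Matrix.mul_diagonal]
  have hLzero : ∀ i j : Fin (D+1), (j:ℕ)+1 ≠ (i:ℕ) → (j:ℕ) ≠ (i:ℕ) → (i:ℕ)+1 ≠ (j:ℕ) →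
      L i j = 0 := by
    intro i j h1 h2 h3
    show (if (j:ℕ)+1 = (i:ℕ) then cc i else 0)
      + (if (j:ℕ) = (i:ℕ) then k - cc i - bb i else 0)
      + (if (i:ℕ)+1 = (j:ℕ) then bb i else 0) = 0
    rw [if_neg h1, if_neg h2, if_neg h3]
    ring
  have hLup : ∀ i j : Fin (D+1), (i:ℕ)+1 = (j:ℕ) → L i j = bb (i:ℕ) := by
    intro i j h
    show (if (j:ℕ)+1 = (i:ℕ) then cc i else 0)
      + (if (j:ℕ) = (i:ℕ) then k - cc i - bb i else 0)
      + (if (i:ℕ)+1 = (j:ℕ) then bb i else 0) = bb (i:ℕ)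
    rw [if_neg (by omega), if_neg (by omega), if_pos h]
    ring
  have hLdown : ∀ i j : Fin (D+1), (j:ℕ)+1 = (i:ℕ) → L i j = cc (i:ℕ) := by
    intro i j h
    show (if (j:ℕ)+1 = (i:ℕ) then cc i else 0)
      + (if (j:ℕ) = (i:ℕ) then k - cc i - bb i else 0)
      + (if (i:ℕ)+1 = (j:ℕ) then bb i else 0) = cc (i:ℕ)
    rw [if_pos h, if_neg (by omega), if_neg (by omega)]
    ring
  have key : ∀ i j : Fin (D+1), (i:ℕ)+1 = (j:ℕ) →
      (δ (j:ℕ))⁻¹ * (cc (j:ℕ) * δ (i:ℕ)) = (δ (i:ℕ))⁻¹ * (bb (i:ℕ) * δ (j:ℕ)) := by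
    intro i j h
    have hjD : (j:ℕ) ≤ D := by omega
    have hiD : (i:ℕ) < D := by omega
    have hbp : 0 < bb (i:ℕ) := hbbpos _ hiD
    have hcq : 0 < cc (j:ℕ) := hccpos _ (by omega) hjD
    have hδp : 0 < δ (i:ℕ) := hδpos _ (by omega)
    set w : ℝ := Real.sqrt (cc ((i:ℕ)+1) / bb (i:ℕ)) with hw
    have hwpos : 0 < w := Real.sqrt_pos.mpr (by rw [h]; positivity)
    have hδq : δ (j:ℕ) = δ (i:ℕ) * w := by rw [← h, hδsucc]
    have hw2 : bb (i:ℕ) * (w * w) = cc (j:ℕ) := by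
      rw [hw, Real.mul_self_sqrt (le_of_lt (by rw [h]; positivity))]
      rw [h]
      field_simp
    rw [hδq]
    field_simp
    linear_combination (-1 : ℝ) * hw2
  have hS : S.IsHermitian := by
    rw [Matrix.IsHermitian]
    ext i j
    rw [Matrix.conjTranspose_apply, star_trivial, hSe, hSe]
    by_cases h1 : (j:ℕ) = (i:ℕ)
    · have : j = i := Fin.ext h1
      subst this
      rfl
    · by_cases h2 : (j:ℕ)+1 = (i:ℕ)
      · rw [hLup j i h2, hLdown i j h2]
        exact (key j i h2).symm
      · by_cases h3 : (i:ℕ)+1 = (j:ℕ)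
        · rw [hLdown j i h3, hLup i j h3]
          exact key i j h3
        · rw [hLzero j i (by omega) (by omega) (by omega),
            hLzero i j (by omega) (by omega) (by omega)]
          ring
  -- annihilating polynomial
  have hann := hermitian_ann S hS
  set lf : List ℝ := List.ofFn hS.eigenvalues with hlf
  have hcommL : L * Δ = Δ * S := by
    rw [hSdef, ← Matrix.mul_assoc, ← Matrix.mul_assoc, hΔΔ', Matrix.one_mul]
  have hLann : (lf.map fun μ : ℝ => L - μ • 1).prod = 0 :=
    similar_ann L S Δ Δ' hΔΔ' hcommL lf hann
  have hone_ne : (fun _ : Fin (D+1) => (1:ℝ)) ≠ 0 := by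
    intro h
    have := congrFun h ⟨0, Nat.succ_pos D⟩
    norm_num at this
  have hkmem : k ∈ lf :=
    mem_of_ann L lf hLann k (fun _ => 1) hone_ne (triL_const D cc bb k hcc0 hbbD)
  set l : List ℝ := lf.erase k with hl
  have hlen : l.length = D := by
    rw [hl, List.length_erase_of_mem hkmem, hlf, List.length_ofFn]
    omega
  have hperm : List.Perm lf (k :: l) := List.perm_cons_erase hkmem
  have hpairwise : (lf.map fun μ : ℝ => L - μ • 1).Pairwise Commute := by
    apply List.pairwise_of_forall_mem_list
    intro x hx y hy
    rcases List.mem_map.mp hx with ⟨μ, _, rfl⟩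
    rcases List.mem_map.mp hy with ⟨ν, _, rfl⟩
    have c1 : Commute L ((ν : ℝ) • (1 : Matrix (Fin (D+1)) (Fin (D+1)) ℝ)) :=
      (Commute.one_right L).smul_right ν
    have c2 : Commute ((μ : ℝ) • (1 : Matrix (Fin (D+1)) (Fin (D+1)) ℝ)) L :=
      (Commute.one_left L).smul_left μ
    have c3 : Commute ((μ : ℝ) • (1 : Matrix (Fin (D+1)) (Fin (D+1)) ℝ))
        ((ν : ℝ) • (1 : Matrix (Fin (D+1)) (Fin (D+1)) ℝ)) :=
      ((Commute.refl (1 : Matrix (Fin (D+1)) (Fin (D+1)) ℝ)).smul_left μ).smul_right ν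
    exact ((Commute.refl L).sub_right c1).sub_left (c2.sub_right c3)
  have hprod0 : ((k :: l).map fun μ : ℝ => L - μ • 1).prod = 0 := by
    rw [← List.Perm.prod_eq' (hperm.map _) hpairwise]
    exact hLann
  rw [List.map_cons, List.prod_cons] at hprod0
  set Q : Matrix (Fin (D+1)) (Fin (D+1)) ℝ := (l.map fun μ : ℝ => L - μ • 1).prod with hQ
  have hLQ : L * Q = k • Q := by
    have h' : (L - k • 1) * Q = L * Q - k • Q := by
      rw [Matrix.sub_mul, Matrix.smul_mul, Matrix.one_mul]
    rw [h'] at hprod0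
    exact sub_eq_zero.mp hprod0
  set yQ : Fin (D+1) → ℝ := Q *ᵥ e0D D with hyQdef
  have hyQ : L *ᵥ yQ = k • yQ := by
    rw [hyQdef, Matrix.mulVec_mulVec, hLQ, Matrix.smul_mulVec]
  have hconst := triL_ker D cc bb k hcc0 (fun r hr => ne_of_gt (hbbpos r hr)) yQ hyQ
  have htop := triL_top D cc bb k hcc0 l (le_of_eq hlen)
  have hD_extv : extv yQ l.length = yQ ⟨l.length, by omega⟩ := extv_lt _ _ (by omega)
  have hγpos : 0 < ∏ s ∈ Finset.Icc 1 l.length, cc s := by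
    apply Finset.prod_pos
    intro s hs
    rw [Finset.mem_Icc] at hs
    exact hccpos s hs.1 (by omega)
  refine ⟨l, hlen, yQ ⟨0, Nat.succ_pos D⟩, ?_, ?_⟩
  · have hne : extv yQ l.length ≠ 0 := by
      rw [htop.2]
      exact ne_of_gt hγpos
    rw [hD_extv] at hne
    rw [hconst] at hne
    exact hne
  · funext r
    exact hconst r

private lemma smul_list_prod {m : Type*} [Fintype m] [DecidableEq m]
    (l : List (ℝ × Matrix m m ℝ)) :
    (l.map fun p => p.1 • p.2).prod = (l.map fun p => p.1).prod • (l.map fun p => p.2).prod := by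
  induction l with
  | nil => simp
  | cons p t ih =>
      simp only [List.map_cons, List.prod_cons, ih]
      rw [smul_mul_assoc, mul_smul_comm, smul_smul]

/-- Every distance-regular graph satisfies the definitive consensus
conjecture: if `G` is connected of diameter `D` and there are intersection
numbers `b₀,…,b_{D-1}` and `c₁,…,c_D` such that for every pair of vertices
`i, j` at distance `r` the number of neighbors of `i` at distance `r - 1`
(resp. `r + 1`) from `j` is `c r` (resp. `b r`), then average consensus is
achievable on `G` with `D` compliant matrices. -/
theorem distance_regular_satisfies_conjecture {N : ℕ} (G : SimpleGraph (Fin N))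
    (hG : G.Connected) (D : ℕ) (hD : G.diam = D) (b c : ℕ → ℕ)
    (hc : ∀ r : ℕ, 1 ≤ r → r ≤ D → ∀ i j : Fin N, G.dist i j = r →
      {v : Fin N | G.Adj i v ∧ G.dist v j = r - 1}.ncard = c r)
    (hb : ∀ r : ℕ, r < D → ∀ i j : Fin N, G.dist i j = r →
      {v : Fin N | G.Adj i v ∧ G.dist v j = r + 1}.ncard = b r) :
    ∃ A : Fin D → Matrix (Fin N) (Fin N) ℝ,
      (∀ t : Fin D, G.Complies (A t)) ∧
      (List.ofFn A).reverse.prod = Matrix.of (fun _ _ => (N : ℝ)⁻¹) := by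
  classical
  have hNE : Nonempty (Fin N) := hG.nonempty
  rcases Nat.eq_zero_or_pos D with hD0 | hDpos
  · -- trivial case : diameter 0, hence a single vertex
    subst hD0
    have hsub : Subsingleton (Fin N) := by
      rcases (SimpleGraph.diam_eq_zero).mp hD with h | h
      · exfalso
        obtain ⟨u, v, huv⟩ := SimpleGraph.exists_edist_eq_ediam_of_finite (G := G)
        rw [h] at huv
        exact (SimpleGraph.edist_ne_top_iff_reachable.mpr (hG u v)) huv
      · exact h
    have hN1 : N = 1 := by
      have h1 : Fintype.card (Fin N) ≤ 1 := Fintype.card_le_one_iff_subsingleton.mpr hsub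
      rw [Fintype.card_fin] at h1
      have h2 : 0 < N := Fin.pos hNE.some
      omega
    subst hN1
    refine ⟨Fin.elim0, fun t => t.elim0, ?_⟩
    rw [List.ofFn_zero, List.reverse_nil, List.prod_nil]
    ext i j
    have : i = j := Subsingleton.elim i j
    subst this
    rw [Matrix.one_apply_eq, Matrix.of_apply]
    norm_num
  -- main case
  have hediam : G.ediam ≠ ⊤ := SimpleGraph.ediam_ne_top_of_diam_ne_zero (by omega)
  have hdistle : ∀ i j : Fin N, G.dist i j ≤ D := by
    intro i j
    rw [← hD]
    exact SimpleGraph.dist_le_diam hediam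
  have hlt : ∀ i j : Fin N, G.dist i j < D + 1 := fun i j => by
    have := hdistle i j; omega
  -- a geodesic of length D
  obtain ⟨u, w, huw⟩ := SimpleGraph.exists_dist_eq_diam (G := G)
  have huwD : G.dist w u = D := by rw [SimpleGraph.dist_comm, huw, hD]
  obtain ⟨p, hp⟩ := hG.exists_walk_length_eq_dist w u
  have hplen : p.length = D := by rw [hp, huwD]
  have hup : ∀ r : ℕ, G.dist w (p.getVert r) ≤ r := by
    intro r
    induction r with
    | zero => rw [p.getVert_zero, SimpleGraph.dist_self]
    | succ r ih =>
        rcases lt_or_ge r p.length with h | h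
        · have hadj := p.adj_getVert_succ h
          have h1 : G.dist (p.getVert r) (p.getVert (r+1)) = 1 :=
            SimpleGraph.dist_eq_one_iff_adj.mpr hadj
          have h2 : G.dist w (p.getVert (r+1))
              ≤ G.dist w (p.getVert r) + G.dist (p.getVert r) (p.getVert (r+1)) :=
            hG.dist_triangle
          omega
        · rw [p.getVert_of_length_le (by omega)]
          rw [huwD]
          omega
  have hdown : ∀ s : ℕ, G.dist (p.getVert (D - s)) u ≤ s := by
    intro s
    induction s with
    | zero =>
        have : D - 0 = p.length := by omega
        rw [this, p.getVert_length, SimpleGraph.dist_self]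
    | succ s ih =>
        rcases le_or_gt D s with h | h
        · have heq : D - (s+1) = D - s := by omega
          rw [heq]
          omega
        · have heq : D - (s+1) + 1 = D - s := by omega
          have hadj := p.adj_getVert_succ (show D - (s+1) < p.length by omega)
          have h1 : G.dist (p.getVert (D - (s+1))) (p.getVert (D - (s+1) + 1)) = 1 :=
            SimpleGraph.dist_eq_one_iff_adj.mpr hadj
          have h2 : G.dist (p.getVert (D - (s+1))) u
              ≤ G.dist (p.getVert (D - (s+1))) (p.getVert (D - (s+1) + 1))
                + G.dist (p.getVert (D - (s+1) + 1)) u :=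
            hG.dist_triangle
          rw [heq] at h1 h2
          omega
  have hvert : ∀ r : ℕ, r ≤ D → G.dist w (p.getVert r) = r := by
    intro r hr
    have h1 := hup r
    have h2 := hdown (D - r)
    have h3 : D - (D - r) = r := by omega
    rw [h3] at h2
    have h4 : G.dist w u ≤ G.dist w (p.getVert r) + G.dist (p.getVert r) u :=
      hG.dist_triangle
    rw [huwD] at h4
    omega
  -- positivity of the intersection numbers
  have hcpos : ∀ r : ℕ, 1 ≤ r → r ≤ D → 0 < c r := by
    intro r h1 h2
    have hd : G.dist (p.getVert r) w = r := by
      rw [SimpleGraph.dist_comm]; exact hvert r h2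
    have hmem : p.getVert (r-1) ∈ {v : Fin N | G.Adj (p.getVert r) v ∧ G.dist v w = r - 1} := by
      constructor
      · have hadj := p.adj_getVert_succ (show r - 1 < p.length by omega)
        have hr1 : r - 1 + 1 = r := by omega
        rw [hr1] at hadj
        exact hadj.symm
      · rw [SimpleGraph.dist_comm]; exact hvert (r-1) (by omega)
    have hcard := hc r h1 h2 (p.getVert r) w hd
    rw [← hcard]
    exact (Set.ncard_pos (Set.toFinite _)).mpr ⟨_, hmem⟩
  have hbpos : ∀ r : ℕ, r < D → 0 < b r := by
    intro r h2
    have hd : G.dist (p.getVert r) w = r := by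
      rw [SimpleGraph.dist_comm]; exact hvert r (by omega)
    have hmem : p.getVert (r+1) ∈ {v : Fin N | G.Adj (p.getVert r) v ∧ G.dist v w = r + 1} := by
      constructor
      · exact p.adj_getVert_succ (by omega)
      · rw [SimpleGraph.dist_comm]; exact hvert (r+1) (by omega)
    have hcard := hb r h2 (p.getVert r) w hd
    rw [← hcard]
    exact (Set.ncard_pos (Set.toFinite _)).mpr ⟨_, hmem⟩
  -- the intersection coefficients as reals
  set k : ℝ := (b 0 : ℝ) with hk
  set cc : ℕ → ℝ := fun r => if 1 ≤ r ∧ r ≤ D then (c r : ℝ) else 0 with hcc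
  set bb : ℕ → ℝ := fun r => if r < D then (b r : ℝ) else 0 with hbb
  have hcc0 : cc 0 = 0 := by rw [hcc]; norm_num
  have hbbD : bb D = 0 := by rw [hbb]; norm_num
  have hccval : ∀ r : ℕ, 1 ≤ r → r ≤ D → cc r = (c r : ℝ) := by
    intro r h1 h2
    rw [hcc]
    exact if_pos ⟨h1, h2⟩
  have hbbval : ∀ r : ℕ, r < D → bb r = (b r : ℝ) := by
    intro r h1
    rw [hbb]
    exact if_pos h1
  have hccpos : ∀ r : ℕ, 1 ≤ r → r ≤ D → 0 < cc r := by
    intro r h1 h2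
    rw [hccval r h1 h2]
    exact_mod_cast hcpos r h1 h2
  have hbbpos' : ∀ r : ℕ, r < D → 0 < bb r := by
    intro r h1
    rw [hbbval r h1]
    exact_mod_cast hbpos r h1
  -- the degree of every vertex is b 0
  have hdeg : ∀ i : Fin N, ((Finset.univ.filter (fun v => G.Adj i v)).card : ℕ) = b 0 := by
    intro i
    have h := hb 0 hDpos i i (SimpleGraph.dist_self)
    rw [← h]
    have hset : {v : Fin N | G.Adj i v ∧ G.dist v i = 0 + 1}
        = ↑(Finset.univ.filter (fun v => G.Adj i v)) := by
      ext v
      simp only [Set.mem_setOf_eq, Finset.coe_filter, Finset.mem_univ, true_and]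
      constructor
      · rintro ⟨h1, _⟩; exact h1
      · intro h1
        exact ⟨h1, SimpleGraph.dist_eq_one_iff_adj.mpr h1.symm⟩
    rw [hset, Set.ncard_coe_finset]
  -- the adjacency matrix
  set Aad : Matrix (Fin N) (Fin N) ℝ :=
    Matrix.of (fun i v : Fin N => if G.Adj i v then (1:ℝ) else 0) with hAad
  -- the bridge lemma
  have bridge : ∀ (j : Fin N) (g : Fin (D+1) → ℝ) (i : Fin N),
      (Aad *ᵥ (fun i' => g ⟨G.dist i' j, hlt i' j⟩)) i
        = (triL D cc bb k *ᵥ g) ⟨G.dist i j, hlt i j⟩ := by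
    intro j g i
    rw [triL_row D cc bb k hcc0]
    have hcoe : ((⟨G.dist i j, hlt i j⟩ : Fin (D+1)) : ℕ) = G.dist i j := rfl
    rw [hcoe]
    have hLHS : (Aad *ᵥ fun i' => g ⟨G.dist i' j, hlt i' j⟩) i
        = ∑ v ∈ Finset.univ.filter (fun v => G.Adj i v), g ⟨G.dist v j, hlt v j⟩ := by
      simp only [Matrix.mulVec, dotProduct, hAad, Matrix.of_apply, ite_mul, one_mul, zero_mul]
      rw [Finset.sum_filter]
    rw [hLHS]
    rcases Nat.eq_zero_or_pos (G.dist i j) with hr0 | hrpos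
    · -- distance 0 : i = j
      have hij : i = j := (hG.dist_eq_zero_iff).mp hr0
      subst hij
      have h1D : (1:ℕ) < D + 1 := Nat.succ_lt_succ hDpos
      have hterm : ∀ v ∈ Finset.univ.filter (fun v => G.Adj i v),
          g ⟨G.dist v i, hlt v i⟩ = g ⟨1, h1D⟩ := by
        intro v hv
        rw [Finset.mem_filter] at hv
        have hone : G.dist v i = 1 := SimpleGraph.dist_eq_one_iff_adj.mpr hv.2.symm
        congr 1
        exact Fin.ext hone
      rw [Finset.sum_congr rfl hterm, Finset.sum_const, hdeg i, nsmul_eq_mul]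
      have hbb0 : bb 0 = k := by rw [hbb, hk]; exact if_pos hDpos
      have hccz : cc (G.dist i i) = 0 := by rw [hr0]; exact hcc0
      have hbbz : bb (G.dist i i) = k := by rw [hr0]; exact hbb0
      have hxx : extv g (G.dist i i + 1) = g ⟨1, h1D⟩ := by
        rw [hr0]
        exact extv_lt g 1 h1D
      rw [hccz, hbbz, hxx, ← hk]
      ring
    · -- distance at least 1
      set r := G.dist i j with hrdef
      set nb := Finset.univ.filter (fun v => G.Adj i v) with hnb
      have hcover : ∀ v ∈ nb, G.dist v j = r - 1 ∨ G.dist v j = r ∨ G.dist v j = r + 1 := by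
        intro v hv
        rw [hnb, Finset.mem_filter] at hv
        have h1 : G.dist i j ≤ G.dist i v + G.dist v j := hG.dist_triangle
        have h2 : G.dist v j ≤ G.dist v i + G.dist i j := hG.dist_triangle
        have h3 : G.dist i v = 1 := SimpleGraph.dist_eq_one_iff_adj.mpr hv.2
        have h4 : G.dist v i = 1 := by rw [SimpleGraph.dist_comm]; exact h3
        omega
      set F1 := nb.filter (fun v => G.dist v j = r - 1) with hF1
      set Frest := nb.filter (fun v => ¬ G.dist v j = r - 1) with hFrest
      set F2 := Frest.filter (fun v => G.dist v j = r) with hF2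
      set F3 := Frest.filter (fun v => ¬ G.dist v j = r) with hF3
      have hsplit : ∑ v ∈ nb, g ⟨G.dist v j, hlt v j⟩
          = (∑ v ∈ F1, g ⟨G.dist v j, hlt v j⟩)
            + ((∑ v ∈ F2, g ⟨G.dist v j, hlt v j⟩) + (∑ v ∈ F3, g ⟨G.dist v j, hlt v j⟩)) := by
        rw [← Finset.sum_filter_add_sum_filter_not nb (fun v => G.dist v j = r - 1),
          ← Finset.sum_filter_add_sum_filter_not Frest (fun v => G.dist v j = r)]
      have hv1 : ∀ v ∈ F1, g ⟨G.dist v j, hlt v j⟩ = extv g (r - 1) := by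
        intro v hv
        rw [hF1, Finset.mem_filter] at hv
        rw [extv_lt g (r-1) (by omega)]
        congr 1
        exact Fin.ext hv.2
      have hv2 : ∀ v ∈ F2, g ⟨G.dist v j, hlt v j⟩ = extv g r := by
        intro v hv
        rw [hF2, Finset.mem_filter] at hv
        rw [extv_lt g r (by omega)]
        congr 1
        exact Fin.ext hv.2
      have hv3 : ∀ v ∈ F3, g ⟨G.dist v j, hlt v j⟩ = extv g (r + 1) := by
        intro v hv
        rw [hF3, Finset.mem_filter, hFrest, Finset.mem_filter] at hv
        have hd := hcover v hv.1.1
        have hd3 : G.dist v j = r + 1 := by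
          rcases hd with h | h | h
          · exact absurd h hv.1.2
          · exact absurd h hv.2
          · exact h
        have hle := hdistle v j
        rw [extv_lt g (r+1) (by omega)]
        congr 1
        exact Fin.ext hd3
      -- cardinalities
      have hcard1 : (F1.card : ℝ) = cc r := by
        have hF1' : F1 = Finset.univ.filter (fun v => G.Adj i v ∧ G.dist v j = r - 1) := by
          rw [hF1, hnb, Finset.filter_filter]
        have hseteq : {v : Fin N | G.Adj i v ∧ G.dist v j = r - 1}
            = ↑(Finset.univ.filter (fun v => G.Adj i v ∧ G.dist v j = r - 1)) := by
          ext v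
          simp
        have := hc r hrpos (by omega) i j hrdef.symm
        rw [hseteq, Set.ncard_coe_finset] at this
        rw [hF1', this, hccval r hrpos (by omega)]
      have hcard3 : (F3.card : ℝ) = bb r := by
        have hF3' : F3 = Finset.univ.filter (fun v => G.Adj i v ∧ G.dist v j = r + 1) := by
          rw [hF3, hFrest, hnb, Finset.filter_filter, Finset.filter_filter]
          apply Finset.filter_congr
          intro v _
          constructor
          · rintro ⟨hadj, hne1, hne2⟩
            refine ⟨hadj, ?_⟩
            have hvnb : v ∈ nb := by
              rw [hnb, Finset.mem_filter]
              exact ⟨Finset.mem_univ v, hadj⟩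
            rcases hcover v hvnb with h | h | h
            · exact absurd h hne1
            · exact absurd h hne2
            · exact h
          · rintro ⟨hadj, heq⟩
            refine ⟨hadj, by omega, by omega⟩
        rcases lt_or_ge r D with hrD | hrD
        · have hseteq : {v : Fin N | G.Adj i v ∧ G.dist v j = r + 1}
              = ↑(Finset.univ.filter (fun v => G.Adj i v ∧ G.dist v j = r + 1)) := by
            ext v
            simp
          have := hb r hrD i j hrdef.symm
          rw [hseteq, Set.ncard_coe_finset] at this
          rw [hF3', this, hbbval r hrD]
        · have hrD' : r = D := by have := hdistle i j; omega
          have hempty : F3 = ∅ := by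
            rw [hF3']
            apply Finset.filter_false_of_mem
            intro v _
            rintro ⟨-, hd⟩
            have := hdistle v j
            omega
          rw [hempty, hrD', hbbD]
          simp
      have hcardnb : (nb.card : ℝ) = k := by
        rw [hnb, hk]
        exact_mod_cast hdeg i
      have hcard2 : (F2.card : ℝ) = k - cc r - bb r := by
        have htot1 : F1.card + Frest.card = nb.card := by
          rw [hF1, hFrest]
          exact Finset.card_filter_add_card_filter_not _
        have htot2 : F2.card + F3.card = Frest.card := by
          rw [hF2, hF3]
          exact Finset.card_filter_add_card_filter_not _
        have hq1 : ((F1.card : ℕ) : ℝ) + ((Frest.card : ℕ) : ℝ) = (nb.card : ℝ) := by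
          exact_mod_cast congrArg (fun n : ℕ => (n : ℝ)) htot1
        have hq2 : ((F2.card : ℕ) : ℝ) + ((F3.card : ℕ) : ℝ) = (Frest.card : ℝ) := by
          exact_mod_cast congrArg (fun n : ℕ => (n : ℝ)) htot2
        rw [hcard1] at hq1
        rw [hcard3] at hq2
        rw [hcardnb] at hq1
        linarith
      rw [hsplit, Finset.sum_congr rfl hv1, Finset.sum_congr rfl hv2,
        Finset.sum_congr rfl hv3, Finset.sum_const, Finset.sum_const, Finset.sum_const,
        nsmul_eq_mul, nsmul_eq_mul, nsmul_eq_mul, hcard1, hcard2, hcard3]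
      ring
  -- extend the bridge to products
  have fold : ∀ (t : List ℝ) (j : Fin N) (g : Fin (D+1) → ℝ),
      ((t.map fun μ : ℝ => Aad - μ • 1).prod) *ᵥ (fun i => g ⟨G.dist i j, hlt i j⟩)
        = fun i => (((t.map fun μ : ℝ => triL D cc bb k - μ • 1).prod) *ᵥ g)
            ⟨G.dist i j, hlt i j⟩ := by
    intro t
    induction t with
    | nil =>
        intro j g
        simp only [List.map_nil, List.prod_nil, Matrix.one_mulVec]
    | cons μ t ih =>
        intro j g
        simp only [List.map_cons, List.prod_cons]
        rw [← Matrix.mulVec_mulVec, ih j g, ← Matrix.mulVec_mulVec]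
        funext i
        rw [Matrix.sub_mulVec, Matrix.smul_mulVec, Matrix.one_mulVec]
        rw [Matrix.sub_mulVec, Matrix.smul_mulVec, Matrix.one_mulVec]
        rw [Pi.sub_apply, Pi.sub_apply, Pi.smul_apply, Pi.smul_apply]
        congr 1
        · exact bridge j _ i
  -- the spectral data
  obtain ⟨l, hlen, γ, hγ, hQe⟩ := small_main D cc bb k hcc0 hbbD hccpos hbbpos'
  -- the unscaled product is the constant matrix γ
  have hP : ((l.map fun μ : ℝ => Aad - μ • 1).prod) = Matrix.of (fun _ _ : Fin N => γ) := by
    ext i j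
    have hx : ∀ v : Fin N, e0D D ⟨G.dist v j, hlt v j⟩ = if v = j then 1 else 0 := by
      intro v
      by_cases hvj : v = j
      · subst hvj
        simp only [e0D]
        rw [if_pos (show ((⟨G.dist v v, hlt v v⟩ : Fin (D+1)) : ℕ) = 0 from
          SimpleGraph.dist_self)]
        simp
      · simp only [e0D]
        rw [if_neg (show ¬ ((⟨G.dist v j, hlt v j⟩ : Fin (D+1)) : ℕ) = 0 from
          fun h0 => hvj ((hG.dist_eq_zero_iff).mp h0)), if_neg hvj]
    have hPx := fold l j (e0D D)
    rw [hQe] at hPx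
    have hentry : (((l.map fun μ : ℝ => Aad - μ • 1).prod)
        *ᵥ (fun v => e0D D ⟨G.dist v j, hlt v j⟩)) i
        = ((l.map fun μ : ℝ => Aad - μ • 1).prod) i j := by
      simp only [Matrix.mulVec, dotProduct]
      rw [Finset.sum_eq_single j]
      · rw [hx j, if_pos rfl, mul_one]
      · intro v _ hv
        rw [hx v, if_neg hv, mul_zero]
      · intro h
        exact absurd (Finset.mem_univ j) h
    have := congrFun hPx i
    rw [hentry] at this
    rw [Matrix.of_apply]
    exact this
  -- the compliant matrices
  have hNpos : 0 < N := Fin.pos hNE.some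
  set σ : Fin D → ℝ := fun t => if t = (⟨0, hDpos⟩ : Fin D) then (γ * (N:ℝ))⁻¹ else 1 with hσ
  set W : Fin D → Matrix (Fin N) (Fin N) ℝ :=
    fun t => Aad - (l.get (Fin.cast hlen.symm t)) • 1 with hW
  refine ⟨fun t => σ t • W t, ?_, ?_⟩
  · intro t i j hne hnadj
    show (σ t • W t) i j = 0
    simp only [hW, hAad, Matrix.smul_apply, Matrix.sub_apply, Matrix.of_apply,
      Matrix.one_apply_ne hne, if_neg hnadj, smul_eq_mul]
    ring
  · -- the product
    have hcommW : ∀ s t : Fin D, Commute (σ s • W s) (σ t • W t) := by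
      intro s t
      have base : Commute (W s) (W t) := by
        rw [hW]
        have c1 : Commute Aad ((l.get (Fin.cast hlen.symm t) : ℝ) • (1 : Matrix (Fin N) (Fin N) ℝ)) :=
          (Commute.one_right Aad).smul_right _
        have c2 : Commute ((l.get (Fin.cast hlen.symm s) : ℝ) • (1 : Matrix (Fin N) (Fin N) ℝ)) Aad :=
          (Commute.one_left Aad).smul_left _
        have c3 : Commute ((l.get (Fin.cast hlen.symm s) : ℝ) • (1 : Matrix (Fin N) (Fin N) ℝ))
            ((l.get (Fin.cast hlen.symm t) : ℝ) • (1 : Matrix (Fin N) (Fin N) ℝ)) :=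
          ((Commute.refl (1 : Matrix (Fin N) (Fin N) ℝ)).smul_left _).smul_right _
        exact ((Commute.refl Aad).sub_right c1).sub_left (c2.sub_right c3)
      exact (base.smul_left (σ s)).smul_right (σ t)
    have hrev : (List.ofFn (fun t => σ t • W t)).reverse.prod
        = (List.ofFn (fun t => σ t • W t)).prod := by
      apply List.Perm.prod_eq' (List.reverse_perm _)
      apply List.pairwise_of_forall_mem_list
      intro x hx y hy
      rw [List.mem_reverse, List.mem_ofFn] at hx
      rw [List.mem_reverse, List.mem_ofFn] at hy
      obtain ⟨s, rfl⟩ := hx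
      obtain ⟨t, rfl⟩ := hy
      exact hcommW s t
    rw [hrev]
    have hpair : List.ofFn (fun t => σ t • W t)
        = (List.ofFn (fun t => (σ t, W t))).map (fun p => p.1 • p.2) := by
      rw [List.map_ofFn]
      rfl
    rw [hpair, smul_list_prod, List.map_ofFn, List.map_ofFn]
    have hmap1 : ((fun p : ℝ × Matrix (Fin N) (Fin N) ℝ => p.1) ∘ (fun t => (σ t, W t))) = σ := rfl
    have hmap2 : ((fun p : ℝ × Matrix (Fin N) (Fin N) ℝ => p.2) ∘ (fun t => (σ t, W t))) = W := rfl
    rw [hmap1, hmap2]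
    have hσprod : (List.ofFn σ).prod = (γ * (N:ℝ))⁻¹ := by
      rw [List.prod_ofFn, hσ]
      rw [Finset.prod_ite_eq' Finset.univ (⟨0, hDpos⟩ : Fin D) (fun _ => (γ * (N:ℝ))⁻¹)]
      rw [if_pos (Finset.mem_univ _)]
    have hWprod : List.ofFn W = l.map (fun μ : ℝ => Aad - μ • 1) := by
      apply List.ext_getElem
      · rw [List.length_ofFn, List.length_map, hlen]
      · intro n h1 h2
        simp only [List.getElem_ofFn, List.getElem_map]
        rfl
    rw [hσprod, hWprod, hP]
    ext i j
    rw [Matrix.smul_apply, Matrix.of_apply, Matrix.of_apply, smul_eq_mul, mul_inv,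
      mul_comm γ⁻¹ ((N:ℝ))⁻¹, mul_assoc, inv_mul_cancel₀ hγ, mul_one]
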